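/- For any m, n ∈ ℕ and any real l > 0, | Σ_{l/2 < d ≤ l, (d,mn)=1} 1/φ(d) − Σ_{l/2 < d ≤ l, (d,m)=1} 1/φ(d) | ≪ Σ_{p | n} 1/p, where the sums over d are over natural numbers, p runs over the prime divisors of n, and the implied constant is absolute. -/

import Mathlib

open scoped Classical
open Finset


private lemma odd_sq_totient : ∀ m : ℕ, Odd m → 1 ≤ m → m ≤ (Nat.totient m)^2 := by
  intro m
  induction m using Nat.strong_induction_on with
  | _ m ih =>
    intro hodd hm
    rcases eq_or_lt_of_le hm with h1 | h1
    · simp [← h1]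
    · set p := m.minFac with hpdef
      have hpp : p.Prime := Nat.minFac_prime (by omega)
      have hpd : p ∣ m := Nat.minFac_dvd m
      have hm0 : m ≠ 0 := by omega
      set k := m.factorization p with hkdef
      have hk : 1 ≤ k := (Nat.Prime.factorization_pos_of_dvd hpp hm0 hpd)
      have hsplit : p ^ k * (m / p ^ k) = m := Nat.ordProj_mul_ordCompl_eq_self m p
      set m' := m / p ^ k with hm'def
      have hcop : Nat.Coprime (p ^ k) m' := (Nat.coprime_ordCompl hpp hm0).pow_left _
      have hm'0 : m' ≠ 0 := by
        intro h; rw [h, mul_zero] at hsplit; omega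
      have hm'lt : m' < m := by
        have hpk : 1 < p ^ k := by
          have := hpp.two_le
          calc 1 < p := by omega
          _ ≤ p ^ k := Nat.le_self_pow (by omega) p
        nlinarith [hsplit, Nat.one_le_iff_ne_zero.mpr hm'0]
      have hm'odd : Odd m' := by
        have : Odd (p ^ k * m') := hsplit.symm ▸ hodd
        exact (Nat.odd_mul.mp this).2
      have ihm' := ih m' hm'lt hm'odd (Nat.one_le_iff_ne_zero.mpr hm'0)
      have hpodd : p ≠ 2 := by
        intro h
        rw [Nat.odd_iff] at hodd
        have : (2:ℕ) ∣ m := h ▸ hpd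
        omega
      have hp3 : 3 ≤ p := by have := hpp.two_le; omega
      have htpk : p ^ k ≤ (Nat.totient (p ^ k))^2 := by
        rw [Nat.totient_prime_pow hpp hk]
        have h1 : p ≤ (p - 1)^2 := by
          have hq : 2 ≤ p - 1 := by omega
          have hpe : p = (p - 1) + 1 := by omega
          nlinarith
        calc p ^ k = p ^ (k-1) * p := by
              rw [← pow_succ]; congr 1; omega
        _ ≤ (p ^ (k-1))^2 * (p-1)^2 := by
              apply Nat.mul_le_mul _ h1
              rw [pow_two]
              exact Nat.le_mul_of_pos_left _ (pow_pos hpp.pos _)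
        _ = (p ^ (k - 1) * (p - 1))^2 := by ring
      calc m = p ^ k * m' := hsplit.symm
      _ ≤ (Nat.totient (p ^ k))^2 * (Nat.totient m')^2 := Nat.mul_le_mul htpk ihm'
      _ = (Nat.totient (p ^ k) * Nat.totient m')^2 := by ring
      _ = (Nat.totient m)^2 := by rw [← Nat.totient_mul hcop, hsplit]

private lemma sq_totient (n : ℕ) (hn : 1 ≤ n) : n ≤ 2 * (Nat.totient n)^2 := by
  have hn0 : n ≠ 0 := by omega
  set k := n.factorization 2 with hkdef
  have hsplit : 2 ^ k * (n / 2 ^ k) = n := Nat.ordProj_mul_ordCompl_eq_self n 2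
  set m := n / 2 ^ k with hmdef
  have hm0 : m ≠ 0 := by intro h; rw [h, mul_zero] at hsplit; omega
  have hmodd : Odd m := by
    have h2 : ¬ 2 ∣ m := Nat.not_dvd_ordCompl Nat.prime_two hn0
    rw [Nat.odd_iff]; omega
  have hmtot := odd_sq_totient m hmodd (Nat.one_le_iff_ne_zero.mpr hm0)
  rcases Nat.eq_zero_or_pos k with hk0 | hk1
  · rw [hk0, pow_zero, one_mul] at hsplit
    rw [← hsplit]
    omega
  · have hcop : Nat.Coprime (2 ^ k) m := (Nat.coprime_ordCompl Nat.prime_two hn0).pow_left _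
    have htot : Nat.totient n = 2^(k-1) * Nat.totient m := by
      rw [← hsplit, Nat.totient_mul hcop, Nat.totient_prime_pow Nat.prime_two hk1]
      norm_num
    rw [htot]
    have h2k : 2^k ≤ 2 * (2^(k-1))^2 := by
      have : 2 * (2^(k-1))^2 = 2^(2*k-1) := by
        rw [pow_two, ← pow_add, ← pow_succ']
        congr 1; omega
      rw [this]
      exact Nat.pow_le_pow_right (by norm_num) (by omega)
    calc n = 2^k * m := hsplit.symm
    _ ≤ (2 * (2^(k-1))^2) * (Nat.totient m)^2 := Nat.mul_le_mul h2k hmtot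
    _ = 2 * (2^(k-1) * Nat.totient m)^2 := by ring


private lemma tele : ∀ D : ℕ, 1 ≤ D →
    ∑ d ∈ Icc 1 D, 1/((d:ℝ) * Real.sqrt d) ≤ 3 - 2/Real.sqrt D := by
  intro D
  induction D with
  | zero => omega
  | succ D ih =>
    intro _
    rcases Nat.eq_zero_or_pos D with h0 | h1
    · subst h0; norm_num
    · rw [← Finset.Ico_add_one_right_eq_Icc, Finset.sum_Ico_succ_top (by omega), Finset.Ico_add_one_right_eq_Icc]
      have ihD := ih h1
      have ha' : (0:ℝ) < Real.sqrt D := Real.sqrt_pos.mpr (by positivity)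
      have hb' : (0:ℝ) < Real.sqrt (D+1) := Real.sqrt_pos.mpr (by positivity)
      set a := Real.sqrt D
      set b := Real.sqrt (D+1)
      have ha2 : a^2 = D := Real.sq_sqrt (by positivity)
      have hb2 : b^2 = (D:ℝ)+1 := by
        have := Real.sq_sqrt (by positivity : (0:ℝ) ≤ (D:ℝ)+1)
        rwa [show ((D:ℕ)+1 : ℝ) = (D:ℝ)+1 by push_cast; ring] at this
      have hab : a ≤ b := Real.sqrt_le_sqrt (by push_cast; linarith)
      have hba : (b - a) * (b + a) = 1 := by nlinarith
      have key : 1/(((D:ℝ)+1) * b) ≤ 2/a - 2/b := by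
        rw [← hb2]
        have hfrac : 2/a - 2/b = 2*(b-a)/(a*b) := by
          field_simp
        rw [hfrac, div_le_div_iff₀ (by positivity) (by positivity)]
        have e1 : a*b*(a+b) ≤ 2*(b^2*b) := by
          nlinarith [mul_nonneg (mul_nonneg (sub_nonneg.mpr hab) hb'.le) hb'.le,
            mul_nonneg (mul_nonneg (sub_nonneg.mpr hab) ha'.le) hb'.le]
        have e3 : 2*(b-a)*(b^2*b)*(a+b) = 2*(b^2*b) := by
          have : 2*(b-a)*(b^2*b)*(a+b) = 2*((b-a)*(b+a))*(b^2*b) := by ring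
          rw [this, hba]; ring
        have hab2 : (0:ℝ) < a + b := by linarith
        apply le_of_mul_le_mul_right _ hab2
        calc 1*(a*b)*(a+b) = a*b*(a+b) := by ring
        _ ≤ 2*(b^2*b) := e1
        _ = 2*(b-a)*(b^2*b)*(a+b) := e3.symm
      have hcast : ((D+1 : ℕ) : ℝ) = (D:ℝ) + 1 := by push_cast; ring
      rw [hcast]
      linarith

private lemma inv_sum_bound (D : ℕ) (hsq : ∀ d : ℕ, 1 ≤ d → d ≤ 2 * (Nat.totient d)^2) :
    ∑ d ∈ Icc 1 D, 1/((d:ℝ) * Nat.totient d) ≤ 5 := by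
  rcases Nat.eq_zero_or_pos D with h0 | h1
  · subst h0; norm_num
  have s2pos : (0:ℝ) < Real.sqrt 2 := Real.sqrt_pos.mpr (by norm_num)
  have step : ∀ d ∈ Icc 1 D, 1/((d:ℝ) * Nat.totient d) ≤ Real.sqrt 2 * (1/((d:ℝ) * Real.sqrt d)) := by
    intro d hd
    simp only [mem_Icc] at hd
    have hd1 : 1 ≤ d := hd.1
    have htp : 0 < Nat.totient d := Nat.totient_pos.mpr (by omega)
    have htpr : (0:ℝ) < (Nat.totient d : ℝ) := by exact_mod_cast htp
    have hdr : (0:ℝ) < d := by exact_mod_cast hd1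
    have h2 : (d:ℝ) ≤ 2 * (Nat.totient d)^2 := by exact_mod_cast hsq d hd1
    have hsqd : Real.sqrt d ≤ Real.sqrt 2 * Nat.totient d := by
      rw [show Real.sqrt 2 * (Nat.totient d : ℝ) = Real.sqrt (2 * (Nat.totient d)^2) by
        rw [Real.sqrt_mul (by norm_num), Real.sqrt_sq (by positivity)]]
      exact Real.sqrt_le_sqrt h2
    have key : (d:ℝ) * Real.sqrt d ≤ Real.sqrt 2 * ((d:ℝ) * Nat.totient d) := by
      calc (d:ℝ) * Real.sqrt d ≤ (d:ℝ) * (Real.sqrt 2 * Nat.totient d) :=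
            mul_le_mul_of_nonneg_left hsqd hdr.le
      _ = Real.sqrt 2 * ((d:ℝ) * Nat.totient d) := by ring
    calc 1/((d:ℝ) * Nat.totient d) = Real.sqrt 2 * (1/(Real.sqrt 2 * ((d:ℝ) * Nat.totient d))) := by
          field_simp
    _ ≤ Real.sqrt 2 * (1/((d:ℝ) * Real.sqrt d)) := by
          apply mul_le_mul_of_nonneg_left _ s2pos.le
          exact one_div_le_one_div_of_le (by positivity) key
  have hsum := Finset.sum_le_sum step
  rw [← Finset.mul_sum] at hsum
  have htele := tele D h1
  have hDpos : (0:ℝ) < Real.sqrt D := Real.sqrt_pos.mpr (by positivity)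
  have h3 : ∑ d ∈ Icc 1 D, 1/((d:ℝ) * Real.sqrt d) ≤ 3 := by
    have : (0:ℝ) < 2/Real.sqrt D := by positivity
    linarith
  have hs2 : Real.sqrt 2 ≤ 1.5 := by
    rw [show (1.5:ℝ) = Real.sqrt (1.5^2) from (Real.sqrt_sq (by norm_num)).symm]
    exact Real.sqrt_le_sqrt (by norm_num)
  have hnn : (0:ℝ) ≤ ∑ d ∈ Icc 1 D, 1/((d:ℝ) * Real.sqrt d) := by
    apply Finset.sum_nonneg; intro d hd; positivity
  calc ∑ d ∈ Icc 1 D, 1/((d:ℝ) * Nat.totient d)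
      ≤ Real.sqrt 2 * ∑ d ∈ Icc 1 D, 1/((d:ℝ) * Real.sqrt d) := hsum
  _ ≤ 1.5 * 3 := mul_le_mul hs2 h3 hnn (by norm_num)
  _ ≤ 5 := by norm_num


private lemma ratio_le (e : ℕ) (he : 1 ≤ e) :
    (e:ℝ)/(Nat.totient e : ℝ) ≤ ∑ d ∈ e.divisors, 1/(Nat.totient d : ℝ) := by
  have he0 : e ≠ 0 := by omega
  have htp : 0 < Nat.totient e := Nat.totient_pos.mpr (by omega)
  have htpr : (0:ℝ) < (Nat.totient e : ℝ) := by exact_mod_cast htp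
  have hsum : (e:ℝ) = ∑ d ∈ e.divisors, (Nat.totient d : ℝ) := by
    exact_mod_cast congrArg (Nat.cast : ℕ → ℝ) (Nat.sum_totient e).symm
  rw [hsum, Finset.sum_div]
  have key : ∀ d ∈ e.divisors, (Nat.totient d : ℝ)/(Nat.totient e : ℝ) ≤ 1/(Nat.totient (e/d) : ℝ) := by
    intro d hd
    rw [Nat.mem_divisors] at hd
    obtain ⟨hdvd, -⟩ := hd
    have hd1 : 1 ≤ d := Nat.pos_of_dvd_of_pos hdvd (by omega)
    have hed1 : 1 ≤ e / d := Nat.div_pos (Nat.le_of_dvd (by omega) hdvd) (by omega)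
    have htd : (0:ℝ) < (Nat.totient d : ℝ) := by
      exact_mod_cast Nat.totient_pos.mpr (by omega)
    have hted : (0:ℝ) < (Nat.totient (e/d) : ℝ) := by
      exact_mod_cast Nat.totient_pos.mpr (by omega)
    rw [div_le_div_iff₀ htpr hted]
    have : Nat.totient d * Nat.totient (e/d) ≤ Nat.totient e := by
      calc Nat.totient d * Nat.totient (e/d) ≤ Nat.totient (d * (e/d)) :=
            Nat.totient_super_multiplicative d (e/d)
      _ = Nat.totient e := by rw [Nat.mul_div_cancel' hdvd]
    calc (Nat.totient d : ℝ) * (Nat.totient (e/d) : ℝ) ≤ (Nat.totient e : ℝ) := by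
          exact_mod_cast this
    _ = 1 * (Nat.totient e : ℝ) := (one_mul _).symm
  calc ∑ d ∈ e.divisors, (Nat.totient d : ℝ)/(Nat.totient e : ℝ)
      ≤ ∑ d ∈ e.divisors, 1/(Nat.totient (e/d) : ℝ) := Finset.sum_le_sum key
  _ = ∑ d ∈ e.divisors, 1/(Nat.totient d : ℝ) :=
      Nat.sum_div_divisors e (fun d => 1/(Nat.totient d : ℝ))


private lemma swap_div (N : ℕ) (f : ℕ → ℝ) :
    ∑ e ∈ Ioc 0 N, ∑ d ∈ e.divisors, f d = ∑ d ∈ Ioc 0 N, ((N/d : ℕ) : ℝ) * f d := by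
  have h1 : ∀ e ∈ Ioc 0 N, ∑ d ∈ e.divisors, f d
      = ∑ d ∈ Ioc 0 N, if d ∣ e then f d else 0 := by
    intro e he
    rw [mem_Ioc] at he
    have hdiv : e.divisors = (Ioc 0 N).filter (· ∣ e) := by
      ext d
      simp only [Nat.mem_divisors, mem_filter, mem_Ioc]
      constructor
      · rintro ⟨hd, he0⟩
        exact ⟨⟨Nat.pos_of_dvd_of_pos hd (by omega), le_trans (Nat.le_of_dvd (by omega) hd) he.2⟩, hd⟩
      · rintro ⟨-, hd⟩
        exact ⟨hd, by omega⟩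
    rw [hdiv, Finset.sum_filter]
  rw [Finset.sum_congr rfl h1, Finset.sum_comm]
  apply Finset.sum_congr rfl
  intro d _
  rw [← Finset.sum_filter, Finset.sum_const, Nat.Ioc_filter_dvd_card_eq_div]
  simp [nsmul_eq_mul]

private lemma dyadic (x : ℝ) (hx : 0 < x)
    (hinv : ∀ D : ℕ, ∑ d ∈ Icc 1 D, 1/((d:ℝ) * Nat.totient d) ≤ 5)
    (hratio : ∀ e : ℕ, 1 ≤ e → (e:ℝ)/(Nat.totient e : ℝ) ≤ ∑ d ∈ e.divisors, 1/(Nat.totient d : ℝ)) :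
    ∑ e ∈ (Icc 1 ⌈x⌉₊).filter (fun e : ℕ => x/2 < (e:ℝ) ∧ (e:ℝ) ≤ x),
      1/(Nat.totient e : ℝ) ≤ 40 := by
  rcases lt_or_ge x 1 with hx1 | hx1
  · have : (Icc 1 ⌈x⌉₊).filter (fun e : ℕ => x/2 < (e:ℝ) ∧ (e:ℝ) ≤ x) = ∅ := by
      apply Finset.filter_false_of_mem
      intro e he
      rw [mem_Icc] at he
      rintro ⟨-, h2⟩
      have : (1:ℝ) ≤ (e:ℝ) := by exact_mod_cast he.1
      linarith
    rw [this]; norm_num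
  · set N := ⌈x⌉₊ with hN
    set A := (Icc 1 N).filter (fun e : ℕ => x/2 < (e:ℝ) ∧ (e:ℝ) ≤ x) with hA
    have step1 : ∀ e ∈ A, 1/(Nat.totient e : ℝ) ≤ (2/x) * ((e:ℝ)/(Nat.totient e : ℝ)) := by
      intro e he
      rw [hA, mem_filter, mem_Icc] at he
      obtain ⟨⟨he1, -⟩, hgt, -⟩ := he
      have htp : (0:ℝ) < (Nat.totient e : ℝ) := by
        exact_mod_cast Nat.totient_pos.mpr (by omega)
      rw [div_le_iff₀ htp] at *
      have : (1:ℝ) ≤ (2/x) * e := by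
        rw [div_mul_eq_mul_div, le_div_iff₀ hx]
        linarith
      calc (1:ℝ) ≤ (2/x) * e := this
      _ = (2/x) * ((e:ℝ)/(Nat.totient e : ℝ)) * (Nat.totient e : ℝ) := by
          field_simp
    have step2 : ∑ e ∈ A, 1/(Nat.totient e : ℝ)
        ≤ (2/x) * ∑ e ∈ Ioc 0 N, ∑ d ∈ e.divisors, 1/(Nat.totient d : ℝ) := by
      calc ∑ e ∈ A, 1/(Nat.totient e : ℝ)
          ≤ ∑ e ∈ A, (2/x) * ((e:ℝ)/(Nat.totient e : ℝ)) := Finset.sum_le_sum step1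
      _ = (2/x) * ∑ e ∈ A, (e:ℝ)/(Nat.totient e : ℝ) := by rw [Finset.mul_sum]
      _ ≤ (2/x) * ∑ e ∈ A, ∑ d ∈ e.divisors, 1/(Nat.totient d : ℝ) := by
          apply mul_le_mul_of_nonneg_left _ (by positivity)
          apply Finset.sum_le_sum
          intro e he
          rw [hA, mem_filter, mem_Icc] at he
          exact hratio e he.1.1
      _ ≤ (2/x) * ∑ e ∈ Ioc 0 N, ∑ d ∈ e.divisors, 1/(Nat.totient d : ℝ) := by
          apply mul_le_mul_of_nonneg_left _ (by positivity)
          apply Finset.sum_le_sum_of_subset_of_nonneg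
          · intro e he
            rw [hA, mem_filter, mem_Icc] at he
            rw [mem_Ioc]
            omega
          · intro e _ _
            apply Finset.sum_nonneg
            intro d _
            positivity
    have hNx : (N:ℝ) ≤ 2*x := by
      calc (N:ℝ) ≤ x + 1 := le_of_lt (Nat.ceil_lt_add_one hx.le)
      _ ≤ 2*x := by linarith
    have step3 : ∑ e ∈ Ioc 0 N, ∑ d ∈ e.divisors, 1/(Nat.totient d : ℝ)
        ≤ 2*x * ∑ d ∈ Icc 1 N, 1/((d:ℝ) * Nat.totient d) := by
      rw [swap_div]
      have : ∀ d ∈ Ioc 0 N, ((N/d : ℕ) : ℝ) * (1/(Nat.totient d : ℝ))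
          ≤ 2*x * (1/((d:ℝ) * Nat.totient d)) := by
        intro d hd
        rw [mem_Ioc] at hd
        have hd1 : (0:ℝ) < (d:ℝ) := by exact_mod_cast hd.1
        have htp : (0:ℝ) < (Nat.totient d : ℝ) := by
          exact_mod_cast Nat.totient_pos.mpr (by omega)
        have hcast : ((N/d : ℕ) : ℝ) ≤ (N:ℝ)/(d:ℝ) := Nat.cast_div_le
        have h1 : ((N/d : ℕ) : ℝ) ≤ 2*x/(d:ℝ) := le_trans hcast (by gcongr)
        calc ((N/d : ℕ) : ℝ) * (1/(Nat.totient d : ℝ))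
            ≤ (2*x/(d:ℝ)) * (1/(Nat.totient d : ℝ)) := by
              apply mul_le_mul_of_nonneg_right h1 (by positivity)
        _ = 2*x * (1/((d:ℝ) * Nat.totient d)) := by field_simp
      calc ∑ d ∈ Ioc 0 N, ((N/d : ℕ) : ℝ) * (1/(Nat.totient d : ℝ))
          ≤ ∑ d ∈ Ioc 0 N, 2*x * (1/((d:ℝ) * Nat.totient d)) := Finset.sum_le_sum this
      _ = 2*x * ∑ d ∈ Ioc 0 N, 1/((d:ℝ) * Nat.totient d) := by rw [Finset.mul_sum]
      _ = 2*x * ∑ d ∈ Icc 1 N, 1/((d:ℝ) * Nat.totient d) := by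
          rw [show Ioc 0 N = Icc 1 N from (Finset.Icc_add_one_left_eq_Ioc 0 N).symm]
    calc ∑ e ∈ A, 1/(Nat.totient e : ℝ)
        ≤ (2/x) * (2*x * ∑ d ∈ Icc 1 N, 1/((d:ℝ) * Nat.totient d)) := by
          apply le_trans step2
          apply mul_le_mul_of_nonneg_left step3 (by positivity)
    _ = 4 * ∑ d ∈ Icc 1 N, 1/((d:ℝ) * Nat.totient d) := by field_simp; ring
    _ ≤ 4 * 5 := by
        apply mul_le_mul_of_nonneg_left (hinv N) (by norm_num)
    _ ≤ 40 := by norm_num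

private lemma per_prime (p : ℕ) (hp : p.Prime) (x : ℝ) (hx : 0 < x) :
    ∑ d ∈ (Icc 1 ⌈x⌉₊).filter (fun d : ℕ => x/2 < (d:ℝ) ∧ (d:ℝ) ≤ x ∧ p ∣ d),
      1/(Nat.totient d : ℝ) ≤ 80/p := by
  have hp2 : 2 ≤ p := hp.two_le
  have hpr : (0:ℝ) < p := by exact_mod_cast hp.pos
  set A := (Icc 1 ⌈x⌉₊).filter (fun d : ℕ => x/2 < (d:ℝ) ∧ (d:ℝ) ≤ x ∧ p ∣ d) with hA
  set B := (Icc 1 ⌈x/p⌉₊).filter (fun e : ℕ => (x/p)/2 < (e:ℝ) ∧ (e:ℝ) ≤ x/p) with hB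
  have hmemA : ∀ d ∈ A, 1 ≤ d ∧ x/2 < (d:ℝ) ∧ (d:ℝ) ≤ x ∧ p ∣ d := by
    intro d hd
    rw [hA, mem_filter, mem_Icc] at hd
    exact ⟨hd.1.1, hd.2⟩
  have hinj : ∀ d₁ ∈ A, ∀ d₂ ∈ A, d₁ / p = d₂ / p → d₁ = d₂ := by
    intro d₁ h₁ d₂ h₂ h
    obtain ⟨-, -, -, hv₁⟩ := hmemA d₁ h₁
    obtain ⟨-, -, -, hv₂⟩ := hmemA d₂ h₂
    rw [← Nat.mul_div_cancel' hv₁, ← Nat.mul_div_cancel' hv₂, h]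
  have heq : ∑ d ∈ A, 1/(Nat.totient d : ℝ)
      = ∑ e ∈ A.image (· / p), 1/(Nat.totient (p * e) : ℝ) := by
    rw [Finset.sum_image hinj]
    apply Finset.sum_congr rfl
    intro d hd
    obtain ⟨-, -, -, hv⟩ := hmemA d hd
    rw [Nat.mul_div_cancel' hv]
  have hsubset : A.image (· / p) ⊆ B := by
    intro e he
    rw [Finset.mem_image] at he
    obtain ⟨d, hd, rfl⟩ := he
    obtain ⟨hd1, hgt, hle, hv⟩ := hmemA d hd
    have hde : p * (d / p) = d := Nat.mul_div_cancel' hv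
    have he1 : 1 ≤ d / p := Nat.div_pos (Nat.le_of_dvd (by omega) hv) (by omega)
    have her : ((d / p : ℕ) : ℝ) = (d:ℝ)/(p:ℝ) := by
      rw [← hde]
      push_cast
      rw [mul_comm]
      field_simp
      rw [Nat.mul_div_cancel _ hp.pos]
    rw [hB, mem_filter, mem_Icc]
    refine ⟨⟨he1, ?_⟩, ?_, ?_⟩
    · have h1 : ((d/p : ℕ) : ℝ) ≤ x/p := by rw [her]; gcongr
      have h2 : (x/p : ℝ) ≤ (⌈x/p⌉₊ : ℝ) := Nat.le_ceil _
      exact_mod_cast le_trans h1 h2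
    · rw [her, div_lt_div_iff₀ (by norm_num : (0:ℝ) < 2) hpr,
        div_mul_cancel₀ _ (ne_of_gt hpr)]
      linarith
    · rw [her]; gcongr
  have hterm : ∀ e ∈ A.image (· / p), 1/(Nat.totient (p * e) : ℝ) ≤ (2/p) * (1/(Nat.totient e : ℝ)) := by
    intro e he
    rw [Finset.mem_image] at he
    obtain ⟨d, hd, rfl⟩ := he
    obtain ⟨hd1, -, -, hv⟩ := hmemA d hd
    have he1 : 1 ≤ d / p := Nat.div_pos (Nat.le_of_dvd (by omega) hv) (by omega)
    set e := d / p
    have hte : (0:ℝ) < (Nat.totient e : ℝ) := by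
      exact_mod_cast Nat.totient_pos.mpr (by omega)
    have hst : (p - 1) * Nat.totient e ≤ Nat.totient (p * e) := by
      calc (p-1) * Nat.totient e = Nat.totient p * Nat.totient e := by rw [Nat.totient_prime hp]
      _ ≤ Nat.totient (p * e) := Nat.totient_super_multiplicative p e
    have hstr : ((p:ℝ)/2) * (Nat.totient e : ℝ) ≤ (Nat.totient (p * e) : ℝ) := by
      have h1 : ((p:ℝ) - 1) * (Nat.totient e : ℝ) ≤ (Nat.totient (p * e) : ℝ) := by
        have := hst
        have hc : ((p - 1 : ℕ) : ℝ) = (p:ℝ) - 1 := by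
          push_cast [Nat.cast_sub (by omega : 1 ≤ p)]
          ring
        calc ((p:ℝ) - 1) * (Nat.totient e : ℝ) = (((p-1 : ℕ) * Nat.totient e : ℕ) : ℝ) := by
              push_cast [hc]; ring
        _ ≤ (Nat.totient (p * e) : ℝ) := by exact_mod_cast hst
      have : (p:ℝ)/2 ≤ (p:ℝ) - 1 := by
        have : (2:ℝ) ≤ (p:ℝ) := by exact_mod_cast hp2
        linarith
      nlinarith [hte]
    calc 1/(Nat.totient (p * e) : ℝ) ≤ 1/(((p:ℝ)/2) * (Nat.totient e : ℝ)) :=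
          one_div_le_one_div_of_le (by positivity) hstr
    _ = (2/p) * (1/(Nat.totient e : ℝ)) := by field_simp
  calc ∑ d ∈ A, 1/(Nat.totient d : ℝ)
      = ∑ e ∈ A.image (· / p), 1/(Nat.totient (p * e) : ℝ) := heq
  _ ≤ ∑ e ∈ A.image (· / p), (2/p) * (1/(Nat.totient e : ℝ)) := Finset.sum_le_sum hterm
  _ = (2/p) * ∑ e ∈ A.image (· / p), 1/(Nat.totient e : ℝ) := by rw [Finset.mul_sum]
  _ ≤ (2/p) * ∑ e ∈ B, 1/(Nat.totient e : ℝ) := by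
      apply mul_le_mul_of_nonneg_left _ (by positivity)
      apply Finset.sum_le_sum_of_subset_of_nonneg hsubset
      intro e _ _
      positivity
  _ ≤ (2/p) * 40 := by
      apply mul_le_mul_of_nonneg_left (dyadic (x/p) (by positivity) (fun D => inv_sum_bound D sq_totient) ratio_le) (by positivity)
  _ = 80/p := by field_simp; ring

private lemma sum_biUnion_le' {ι : Type*} (s : Finset ι) (t : ι → Finset ℕ) (f : ℕ → ℝ)
    (hf : ∀ x, 0 ≤ f x) : ∑ x ∈ s.biUnion t, f x ≤ ∑ a ∈ s, ∑ x ∈ t a, f x := by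
  classical
  induction s using Finset.induction_on with
  | empty => simp
  | insert _ _ ha ih =>
    rename_i a s
    rw [Finset.biUnion_insert, Finset.sum_insert ha]
    calc ∑ x ∈ t a ∪ s.biUnion t, f x
        ≤ ∑ x ∈ t a, f x + ∑ x ∈ s.biUnion t, f x := by
          have h : ∑ x ∈ t a ∪ s.biUnion t, f x + ∑ x ∈ t a ∩ s.biUnion t, f x
              = ∑ x ∈ t a, f x + ∑ x ∈ s.biUnion t, f x := Finset.sum_union_inter
          have hnn : 0 ≤ ∑ x ∈ t a ∩ s.biUnion t, f x := Finset.sum_nonneg fun x _ => hf x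
          linarith
    _ ≤ ∑ x ∈ t a, f x + ∑ a ∈ s, ∑ x ∈ t a, f x := by linarith [ih]

/-- Lemma 2 (first statement) of the paper: for any `m, n ∈ ℕ` and any real `l > 0`,
`|Σ_{l/2 < d ≤ l, (d,mn)=1} 1/φ(d) − Σ_{l/2 < d ≤ l, (d,m)=1} 1/φ(d)| ≪ Σ_{p ∣ n} 1/p`,
where `p` runs over the prime divisors of `n` and the implied constant is absolute. -/
theorem statement_4 :
    ∃ C : ℝ, 0 < C ∧ ∀ (m n : ℕ) (l : ℝ), 1 ≤ m → 1 ≤ n → 0 < l →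
      |(∑ d ∈ (Finset.Icc 1 ⌈l⌉₊).filter
            (fun d : ℕ => l / 2 < (d : ℝ) ∧ (d : ℝ) ≤ l ∧ Nat.Coprime d (m * n)),
          1 / (Nat.totient d : ℝ)) -
        (∑ d ∈ (Finset.Icc 1 ⌈l⌉₊).filter
            (fun d : ℕ => l / 2 < (d : ℝ) ∧ (d : ℝ) ≤ l ∧ Nat.Coprime d m),
          1 / (Nat.totient d : ℝ))|
        ≤ C * ∑ p ∈ n.primeFactors, 1 / (p : ℝ) := by
  refine ⟨80, by norm_num, ?_⟩
  intro m n l hm hn hl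
  set F1 := (Finset.Icc 1 ⌈l⌉₊).filter
      (fun d : ℕ => l / 2 < (d : ℝ) ∧ (d : ℝ) ≤ l ∧ Nat.Coprime d (m * n)) with hF1
  set F2 := (Finset.Icc 1 ⌈l⌉₊).filter
      (fun d : ℕ => l / 2 < (d : ℝ) ∧ (d : ℝ) ≤ l ∧ Nat.Coprime d m) with hF2
  have hsubset : F1 ⊆ F2 := by
    intro d hd
    rw [hF1, mem_filter] at hd
    rw [hF2, mem_filter]
    exact ⟨hd.1, hd.2.1, hd.2.2.1, (Nat.coprime_mul_iff_right.mp hd.2.2.2).1⟩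
  have hdiff : (∑ d ∈ F1, 1 / (Nat.totient d : ℝ)) - (∑ d ∈ F2, 1 / (Nat.totient d : ℝ))
      = -(∑ d ∈ F2 \ F1, 1 / (Nat.totient d : ℝ)) := by
    have := Finset.sum_sdiff (f := fun d : ℕ => 1 / (Nat.totient d : ℝ)) hsubset
    linarith
  rw [hdiff, abs_neg, abs_of_nonneg (Finset.sum_nonneg fun d _ => by positivity)]
  -- union bound
  have hUnion : F2 \ F1 ⊆ n.primeFactors.biUnion
      (fun p => (Icc 1 ⌈l⌉₊).filter (fun d : ℕ => l/2 < (d:ℝ) ∧ (d:ℝ) ≤ l ∧ p ∣ d)) := by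
    intro d hd
    rw [Finset.mem_sdiff, hF1, hF2, mem_filter, mem_filter] at hd
    obtain ⟨⟨hIcc, h1, h2, hcm⟩, hnot⟩ := hd
    have hncop : ¬ Nat.Coprime d n := by
      intro hcn
      exact hnot ⟨hIcc, h1, h2, Nat.Coprime.mul_right hcm hcn⟩
    obtain ⟨p, hp, hpd, hpn⟩ := Nat.Prime.not_coprime_iff_dvd.mp hncop
    rw [Finset.mem_biUnion]
    refine ⟨p, ?_, ?_⟩
    · exact Nat.mem_primeFactors.mpr ⟨hp, hpn, by omega⟩
    · rw [mem_filter]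
      exact ⟨hIcc, h1, h2, hpd⟩
  calc ∑ d ∈ F2 \ F1, 1 / (Nat.totient d : ℝ)
      ≤ ∑ d ∈ n.primeFactors.biUnion
          (fun p => (Icc 1 ⌈l⌉₊).filter (fun d : ℕ => l/2 < (d:ℝ) ∧ (d:ℝ) ≤ l ∧ p ∣ d)),
          1 / (Nat.totient d : ℝ) := by
        apply Finset.sum_le_sum_of_subset_of_nonneg hUnion
        intro d _ _
        positivity
  _ ≤ ∑ p ∈ n.primeFactors,
        ∑ d ∈ (Icc 1 ⌈l⌉₊).filter (fun d : ℕ => l/2 < (d:ℝ) ∧ (d:ℝ) ≤ l ∧ p ∣ d),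
          1 / (Nat.totient d : ℝ) :=
      sum_biUnion_le' _ _ _ (fun d => by positivity)
  _ ≤ ∑ p ∈ n.primeFactors, 80/(p:ℝ) := by
      apply Finset.sum_le_sum
      intro p hp
      exact per_prime p (Nat.prime_of_mem_primeFactors hp) l hl
  _ = 80 * ∑ p ∈ n.primeFactors, 1/(p:ℝ) := by
      rw [Finset.mul_sum]
      apply Finset.sum_congr rfl
      intro p _
      rw [mul_one_div]
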